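/- arXiv:2205.08167 — 2 statements merged into one kernel-verified Lean document; each statement's English description precedes it below -/
import Mathlib

section
/- Let d ≥ 3 and let u ∈ H¹(ℝ^d) be radial in the first d−1 variables, i.e. u(y, x_d) = u(|y|, x_d) for x = (y, x_d) ∈ ℝ^{d−1} × ℝ. Then there is a constant C > 0 depending only on d such that for every R > 0, ∫_ℝ ‖u(·, x_d)‖²_{L^∞({y ∈ ℝ^{d−1} : |y| ≥ R})} dx_d ≤ C R^{−(d−2)} ‖u‖_{L²(ℝ^d)} ‖∇_y u‖_{L²(ℝ^d)}, where ∇_y is the gradient in the first d−1 variables. -/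
open MeasureTheory Real

open MeasureTheory Measure Set Metric
open scoped ENNReal NNReal

lemma my_lintegral_fun_norm_addHaar {E : Type*} [NormedAddCommGroup E] [NormedSpace ℝ E]
    [MeasurableSpace E] [BorelSpace E] [Nontrivial E] [FiniteDimensional ℝ E]
    (μ : Measure E) [μ.IsAddHaarMeasure] (g : ℝ → ℝ≥0∞) (hg : Measurable g) :
    ∫⁻ x, g ‖x‖ ∂μ =
      (Module.finrank ℝ E : ℝ≥0∞) * μ (ball 0 1) *
        ∫⁻ r in Ioi (0:ℝ), ENNReal.ofReal (r ^ (Module.finrank ℝ E - 1)) * g r := by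
  have h1 : ∫⁻ x, g ‖x‖ ∂μ = ∫⁻ x in ({0}ᶜ : Set E), g ‖x‖ ∂μ := by
    rw [restrict_compl_singleton]
  have h2 : ∫⁻ x : ({0}ᶜ : Set E), g ‖(x : E)‖ ∂(μ.comap Subtype.val)
      = ∫⁻ x in ({0}ᶜ : Set E), g ‖x‖ ∂μ :=
    lintegral_subtype_comap (measurableSet_singleton _).compl (fun x => g ‖x‖)
  have h3 : ∫⁻ x : ({0}ᶜ : Set E), g ‖(x : E)‖ ∂(μ.comap Subtype.val)
      = ∫⁻ p : sphere (0:E) 1 × Ioi (0:ℝ), g p.2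
          ∂(μ.toSphere.prod (volumeIoiPow (Module.finrank ℝ E - 1))) := by
    rw [← μ.measurePreserving_homeomorphUnitSphereProd.lintegral_comp
      (f := fun p : sphere (0:E) 1 × Ioi (0:ℝ) => g p.2)
      (hg.comp (measurable_subtype_coe.comp measurable_snd))]
    simp
  have h4 : ∫⁻ p : sphere (0:E) 1 × Ioi (0:ℝ), g p.2
          ∂(μ.toSphere.prod (volumeIoiPow (Module.finrank ℝ E - 1)))
      = μ.toSphere univ * ∫⁻ r : Ioi (0:ℝ), g r ∂(volumeIoiPow (Module.finrank ℝ E - 1)) := by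
    rw [lintegral_prod (f := fun p : sphere (0:E) 1 × Ioi (0:ℝ) => g p.2)
      ((hg.comp (measurable_subtype_coe.comp measurable_snd)).aemeasurable)]
    simp [lintegral_const, mul_comm]
  have h5 : ∫⁻ r : Ioi (0:ℝ), g r ∂(volumeIoiPow (Module.finrank ℝ E - 1))
      = ∫⁻ r in Ioi (0:ℝ), ENNReal.ofReal (r ^ (Module.finrank ℝ E - 1)) * g r := by
    rw [volumeIoiPow, lintegral_withDensity_eq_lintegral_mul _
      (f := fun r : Ioi (0:ℝ) => ENNReal.ofReal ((r:ℝ) ^ (Module.finrank ℝ E - 1)))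
      ((measurable_subtype_coe.pow_const _).ennreal_ofReal)
      (g := fun r : Ioi (0:ℝ) => g r) (hg.comp measurable_subtype_coe)]
    simp only [Pi.mul_apply]
    exact lintegral_subtype_comap measurableSet_Ioi
      (fun r : ℝ => ENNReal.ofReal (r ^ (Module.finrank ℝ E - 1)) * g r)
  rw [h1, ← h2, h3, h4, h5, toSphere_apply_univ]

lemma slice_bound {φ ψ : ℝ → ℂ} (hφψ : ∀ x, HasDerivAt φ (ψ x) x) (hψ : Measurable ψ)
    {m : ℕ} {R : ℝ} (hR : 0 < R)
    (hJ : (∫⁻ ρ in Ioi (0:ℝ), ENNReal.ofReal (ρ^m) *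
        (ENNReal.ofReal ‖φ ρ‖ * ENNReal.ofReal ‖ψ ρ‖)) ≠ ⊤)
    (hA : (∫⁻ ρ in Ioi (0:ℝ), ENNReal.ofReal (ρ^m) * ENNReal.ofReal (‖φ ρ‖^2)) ≠ ⊤)
    {r : ℝ} (hr : R ≤ r) :
    ‖φ r‖^2 ≤ (ENNReal.ofReal (4 * (R^m)⁻¹) * ∫⁻ ρ in Ioi (0:ℝ),
        ENNReal.ofReal (ρ^m) * (ENNReal.ofReal ‖φ ρ‖ * ENNReal.ofReal ‖ψ ρ‖)).toReal := by
  have hr0 : (0:ℝ) < r := lt_of_lt_of_le hR hr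
  set J : ℝ≥0∞ := ∫⁻ ρ in Ioi (0:ℝ), ENNReal.ofReal (ρ^m) *
      (ENNReal.ofReal ‖φ ρ‖ * ENNReal.ofReal ‖ψ ρ‖) with hJdef
  set c : ℝ := (ENNReal.ofReal (4 * (R^m)⁻¹) * J).toReal with hcdef
  have hctop : ENNReal.ofReal (4 * (R^m)⁻¹) * J ≠ ⊤ :=
    ENNReal.mul_ne_top ENNReal.ofReal_ne_top hJ
  have hφc : Continuous φ := by
    rw [continuous_iff_continuousAt]; exact fun x => (hφψ x).continuousAt
  set F : ℝ → ℝ := fun ρ => ‖φ ρ‖^2 with hFdef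
  set F' : ℝ → ℝ := fun ρ => 2*((φ ρ).re*(ψ ρ).re) + 2*((φ ρ).im*(ψ ρ).im) with hF'def
  have hF : ∀ x, HasDerivAt F (F' x) x := by
    intro x
    have hre : HasDerivAt (fun ρ => (φ ρ).re) ((ψ x).re) x :=
      Complex.reCLM.hasFDerivAt.comp_hasDerivAt x (hφψ x)
    have him : HasDerivAt (fun ρ => (φ ρ).im) ((ψ x).im) x :=
      Complex.imCLM.hasFDerivAt.comp_hasDerivAt x (hφψ x)
    have h2 := (hre.pow 2).add (him.pow 2)
    have hFeq : F = fun ρ => ((φ ρ).re)^2 + ((φ ρ).im)^2 := by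
      funext ρ
      simp only [hFdef, Complex.sq_norm, Complex.normSq_apply]
      ring
    rw [hFeq]
    exact h2.congr_deriv (by simp only [hF'def]; push_cast; ring)
  have hF'le : ∀ ρ, |F' ρ| ≤ 4*(‖φ ρ‖*‖ψ ρ‖) := by
    intro ρ
    have h1 : |(φ ρ).re| ≤ ‖φ ρ‖ := Complex.abs_re_le_norm _
    have h2 : |(φ ρ).im| ≤ ‖φ ρ‖ := Complex.abs_im_le_norm _
    have h3 : |(ψ ρ).re| ≤ ‖ψ ρ‖ := Complex.abs_re_le_norm _
    have h4 : |(ψ ρ).im| ≤ ‖ψ ρ‖ := Complex.abs_im_le_norm _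
    have key : |F' ρ| ≤ 2*(|(φ ρ).re| * |(ψ ρ).re|) + 2*(|(φ ρ).im| * |(ψ ρ).im|) := by
      calc |F' ρ| ≤ |2*((φ ρ).re*(ψ ρ).re)| + |2*((φ ρ).im*(ψ ρ).im)| := abs_add_le _ _
      _ = 2*(|(φ ρ).re| * |(ψ ρ).re|) + 2*(|(φ ρ).im| * |(ψ ρ).im|) := by
        rw [abs_mul, abs_mul, abs_mul, abs_mul]; norm_num
    have h5 : (0:ℝ) ≤ |(ψ ρ).re| := abs_nonneg _
    have h6 : (0:ℝ) ≤ |(ψ ρ).im| := abs_nonneg _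
    have h7 : (0:ℝ) ≤ |(φ ρ).re| := abs_nonneg _
    have h8 : (0:ℝ) ≤ |(φ ρ).im| := abs_nonneg _
    nlinarith
  set G : ℝ → ℝ := fun ρ => 4*(‖φ ρ‖*‖ψ ρ‖) with hGdef
  have hGmeas : Measurable G :=
    (measurable_const.mul ((hφc.measurable.norm).mul hψ.norm))
  have hupmeas : Measurable fun ρ : ℝ => ENNReal.ofReal (ρ^m) *
      (ENNReal.ofReal ‖φ ρ‖ * ENNReal.ofReal ‖ψ ρ‖) :=
    ((measurable_id.pow_const m).ennreal_ofReal).mul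
      ((hφc.measurable.norm.ennreal_ofReal).mul (hψ.norm.ennreal_ofReal))
  have keyL : ∀ s : ℝ, r ≤ s →
      (∫⁻ ρ in Ioc r s, ENNReal.ofReal (G ρ)) ≤ ENNReal.ofReal (4 * (R^m)⁻¹) * J := by
    intro s hs
    have step1 : (∫⁻ ρ in Ioc r s, ENNReal.ofReal (G ρ)) ≤
        ∫⁻ ρ in Ioc r s, ENNReal.ofReal (4 * (R^m)⁻¹) *
          (ENNReal.ofReal (ρ^m) * (ENNReal.ofReal ‖φ ρ‖ * ENNReal.ofReal ‖ψ ρ‖)) := by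
      refine setLIntegral_mono (measurable_const.mul hupmeas) fun ρ hρ => ?_
      have hρR : R ≤ ρ := le_trans hr (le_of_lt hρ.1)
      have hρ0 : 0 < ρ := lt_of_lt_of_le hR hρR
      have hRm : (0:ℝ) < R^m := pow_pos hR m
      have hmono : R^m ≤ ρ^m := pow_le_pow_left₀ hR.le hρR m
      rw [← ENNReal.ofReal_mul (norm_nonneg (φ ρ)), ← ENNReal.ofReal_mul (pow_nonneg hρ0.le m),
        ← ENNReal.ofReal_mul (mul_nonneg (by norm_num) (inv_nonneg.2 hRm.le))]
      apply ENNReal.ofReal_le_ofReal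
      have h1 : (1:ℝ) ≤ (R^m)⁻¹ * ρ^m := by
        rw [← div_eq_inv_mul, le_div_iff₀ hRm, one_mul]; exact hmono
      have hn : (0:ℝ) ≤ ‖φ ρ‖*‖ψ ρ‖ := by positivity
      calc 4*(‖φ ρ‖*‖ψ ρ‖) = 4*1*(‖φ ρ‖*‖ψ ρ‖) := by ring
      _ ≤ 4*((R^m)⁻¹*ρ^m)*(‖φ ρ‖*‖ψ ρ‖) := by nlinarith
      _ = 4*(R^m)⁻¹*(ρ^m*(‖φ ρ‖*‖ψ ρ‖)) := by ring
    have step2 : (∫⁻ ρ in Ioc r s, ENNReal.ofReal (4 * (R^m)⁻¹) *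
          (ENNReal.ofReal (ρ^m) * (ENNReal.ofReal ‖φ ρ‖ * ENNReal.ofReal ‖ψ ρ‖)))
        = ENNReal.ofReal (4 * (R^m)⁻¹) * ∫⁻ ρ in Ioc r s,
          ENNReal.ofReal (ρ^m) * (ENNReal.ofReal ‖φ ρ‖ * ENNReal.ofReal ‖ψ ρ‖) :=
      lintegral_const_mul _ hupmeas
    refine le_trans step1 (le_trans (le_of_eq step2) ?_)
    exact mul_le_mul' le_rfl (lintegral_mono_set (fun ρ hρ => lt_of_lt_of_le hr0 (le_of_lt hρ.1)))
  have hGint : ∀ s : ℝ, r ≤ s → IntegrableOn G (Ioc r s) := by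
    intro s hs
    refine ⟨hGmeas.aestronglyMeasurable, ?_⟩
    rw [hasFiniteIntegral_iff_norm]
    have : (∫⁻ ρ in Ioc r s, ENNReal.ofReal ‖G ρ‖) = ∫⁻ ρ in Ioc r s, ENNReal.ofReal (G ρ) := by
      congr 1; funext ρ; rw [Real.norm_eq_abs, abs_of_nonneg (by positivity)]
    rw [this]
    exact lt_of_le_of_lt (keyL s hs) (lt_top_iff_ne_top.2 hctop)
  have hF'int : ∀ s : ℝ, r ≤ s → IntegrableOn F' (Ioc r s) := by
    intro s hs
    refine Integrable.mono' (hGint s hs) ?_ ?_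
    · exact ((((hφc.measurable.re).mul hψ.re).const_mul 2).add
        (((hφc.measurable.im).mul hψ.im).const_mul 2)).aestronglyMeasurable
    · exact Filter.Eventually.of_forall fun ρ => by
        rw [Real.norm_eq_abs]; exact hF'le ρ
  have hstep : ∀ s : ℝ, r ≤ s → F r ≤ F s + c := by
    intro s hs
    have hint : IntervalIntegrable F' volume r s := by
      rw [intervalIntegrable_iff_integrableOn_Ioc_of_le hs]
      exact hF'int s hs
    have hFTC : ∫ x in r..s, F' x = F s - F r :=
      intervalIntegral.integral_eq_sub_of_hasDerivAt (fun x _ => hF x) hint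
    have habs : |∫ x in r..s, F' x| ≤ ∫ x in r..s, |F' x| :=
      intervalIntegral.abs_integral_le_integral_abs hs
    have h2 : ∫ x in r..s, |F' x| = ∫ x in Ioc r s, |F' x| := by
      rw [intervalIntegral.integral_of_le hs]
    have h3 : ∫ x in Ioc r s, |F' x| ≤ ∫ x in Ioc r s, G x :=
      integral_mono ((hF'int s hs).abs) (hGint s hs) hF'le
    have h4 : ∫ x in Ioc r s, G x ≤ c := by
      rw [integral_eq_lintegral_of_nonneg_ae
        (Filter.Eventually.of_forall fun ρ => by positivity)
        hGmeas.aestronglyMeasurable]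
      exact ENNReal.toReal_mono hctop (keyL s hs)
    have : |F s - F r| ≤ c := by
      rw [← hFTC]; exact le_trans habs (by linarith)
    have := abs_le.1 this
    linarith [this.1]
  have hdec : ∀ ε > 0, ∃ s, r ≤ s ∧ F s < ε := by
    intro ε hε
    by_contra h
    push_neg at h
    set N := max r 1 with hNdef
    have hN1 : (1:ℝ) ≤ N := le_max_right _ _
    have hNr : r ≤ N := le_max_left _ _
    have hbig : (∫⁻ ρ in Ioi N, ENNReal.ofReal (ρ^m) * ENNReal.ofReal (‖φ ρ‖^2)) = ⊤ := by
      have hge : ∀ ρ ∈ Ioi N, ENNReal.ofReal ε ≤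
          ENNReal.ofReal (ρ^m) * ENNReal.ofReal (‖φ ρ‖^2) := by
        intro ρ hρ
        have hρ1 : (1:ℝ) ≤ ρ := le_trans hN1 (le_of_lt hρ)
        have h1 : (1:ℝ) ≤ ρ^m := one_le_pow₀ hρ1
        have h2 : ε ≤ ‖φ ρ‖^2 := h ρ (le_trans hNr (le_of_lt hρ))
        calc ENNReal.ofReal ε ≤ ENNReal.ofReal (‖φ ρ‖^2) := ENNReal.ofReal_le_ofReal h2
        _ ≤ ENNReal.ofReal (ρ^m) * ENNReal.ofReal (‖φ ρ‖^2) :=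
          le_mul_of_one_le_left (by positivity) (ENNReal.one_le_ofReal.2 h1)
      have hconst : (∫⁻ _ in Ioi N, ENNReal.ofReal ε) = ⊤ := by
        rw [setLIntegral_const, Real.volume_Ioi, ENNReal.mul_top]
        exact fun h0 => (ENNReal.ofReal_pos.2 hε).ne' h0
      refine top_unique ?_
      rw [← hconst]
      exact setLIntegral_mono ((measurable_id.pow_const m).ennreal_ofReal.mul
        ((hφc.measurable.norm.pow_const 2).ennreal_ofReal)) hge
    have hsub : (∫⁻ ρ in Ioi N, ENNReal.ofReal (ρ^m) * ENNReal.ofReal (‖φ ρ‖^2)) ≤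
        ∫⁻ ρ in Ioi (0:ℝ), ENNReal.ofReal (ρ^m) * ENNReal.ofReal (‖φ ρ‖^2) :=
      lintegral_mono_set fun ρ hρ => lt_of_lt_of_le (by linarith : (0:ℝ) < N) (le_of_lt hρ)
    rw [hbig] at hsub
    exact hA (top_unique hsub)
  refine le_of_forall_pos_le_add fun ε hε => ?_
  obtain ⟨s, hs, hFs⟩ := hdec ε hε
  have h := hstep s hs
  have hfin : F r ≤ c + ε := by linarith
  exact hfin

lemma coord_CS {n : ℕ} (L : (EuclideanSpace ℝ (Fin n) × ℝ) →L[ℝ] ℂ)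
    {y : EuclideanSpace ℝ (Fin n)} (hy : ‖y‖ = 1) :
    ‖L (y, 0)‖^2 ≤ ∑ i : Fin n, ‖L (EuclideanSpace.single i 1, 0)‖^2 := by
  have hdecomp : ((y, 0) : EuclideanSpace ℝ (Fin n) × ℝ)
      = ∑ i : Fin n, y i • ((EuclideanSpace.single i 1 : EuclideanSpace ℝ (Fin n)), (0:ℝ)) := by
    refine Prod.ext ?_ ?_
    · rw [Prod.fst_sum]
      ext j
      rw [WithLp.ofLp_sum, Finset.sum_apply]
      simp [EuclideanSpace.single_apply]
    · rw [Prod.snd_sum]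
      simp
  have h1 : ‖L (y, 0)‖ ≤ ∑ i : Fin n, |y i| * ‖L (EuclideanSpace.single i 1, 0)‖ := by
    rw [hdecomp, _root_.map_sum]
    refine le_trans (norm_sum_le _ _) (le_of_eq ?_)
    congr 1; funext i
    rw [_root_.map_smul, norm_smul, Real.norm_eq_abs]
  have h2 : (∑ i : Fin n, |y i| * ‖L (EuclideanSpace.single i 1, 0)‖)^2
      ≤ (∑ i : Fin n, |y i|^2) * ∑ i : Fin n, ‖L (EuclideanSpace.single i 1, 0)‖^2 :=
    Finset.sum_mul_sq_le_sq_mul_sq _ _ _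
  have h3 : (∑ i : Fin n, |y i|^2) = 1 := by
    have := EuclideanSpace.norm_eq y
    rw [hy] at this
    have h4 : (∑ i : Fin n, ‖y i‖^2) = 1 := by
      have hnn : 0 ≤ ∑ i : Fin n, ‖y i‖^2 := Finset.sum_nonneg fun i _ => sq_nonneg _
      rw [← Real.sq_sqrt hnn, ← EuclideanSpace.norm_eq, hy, one_pow]
    simpa [Real.norm_eq_abs] using h4
  calc ‖L (y, 0)‖^2 ≤ (∑ i : Fin n, |y i| * ‖L (EuclideanSpace.single i 1, 0)‖)^2 := by
        apply pow_le_pow_left₀ (norm_nonneg _) h1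
  _ ≤ (∑ i : Fin n, |y i|^2) * ∑ i : Fin n, ‖L (EuclideanSpace.single i 1, 0)‖^2 := h2
  _ = ∑ i : Fin n, ‖L (EuclideanSpace.single i 1, 0)‖^2 := by rw [h3, one_mul]

lemma radial_fderiv {n : ℕ} {u : EuclideanSpace ℝ (Fin n) × ℝ → ℂ}
    (hu : Differentiable ℝ u)
    (hrad : ∀ (y y' : EuclideanSpace ℝ (Fin n)) (t : ℝ), ‖y‖ = ‖y'‖ → u (y, t) = u (y', t))
    {e : EuclideanSpace ℝ (Fin n)} (he : ‖e‖ = 1) (t : ℝ)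
    {y : EuclideanSpace ℝ (Fin n)} (hy : y ≠ 0) :
    fderiv ℝ u (‖y‖ • e, t) (e, 0) = fderiv ℝ u (y, t) (‖y‖⁻¹ • y, 0) := by
  have hyn : ‖y‖ ≠ 0 := norm_ne_zero_iff.2 hy
  have hb : ‖(‖y‖⁻¹ • y : EuclideanSpace ℝ (Fin n))‖ = 1 := by
    rw [norm_smul, norm_inv, norm_norm, inv_mul_cancel₀ hyn]
  set O : EuclideanSpace ℝ (Fin n) ≃ₗᵢ[ℝ] EuclideanSpace ℝ (Fin n) :=
    Submodule.reflection (ℝ ∙ (e - ‖y‖⁻¹ • y))ᗮ with hOdef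
  have hOe : O e = ‖y‖⁻¹ • y := Submodule.reflection_sub (by rw [he, hb])
  have hw : ∀ z : EuclideanSpace ℝ (Fin n), HasFDerivAt (fun z' => u (z', t))
      ((fderiv ℝ u (z, t)).comp (ContinuousLinearMap.inl ℝ (EuclideanSpace ℝ (Fin n)) ℝ)) z :=
    fun z => ((hu (z,t)).hasFDerivAt).comp z (hasFDerivAt_prodMk_left z t)
  have hOz : O (‖y‖ • e) = y := by
    rw [LinearIsometryEquiv.map_smul, hOe, smul_smul, mul_inv_cancel₀ hyn, one_smul]
  have hcomp : HasFDerivAt (fun z => u (O z, t))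
      (((fderiv ℝ u (O (‖y‖ • e), t)).comp
          (ContinuousLinearMap.inl ℝ (EuclideanSpace ℝ (Fin n)) ℝ)).comp
        (O.toContinuousLinearEquiv : EuclideanSpace ℝ (Fin n) →L[ℝ] EuclideanSpace ℝ (Fin n)))
      (‖y‖ • e) :=
    (hw (O (‖y‖ • e))).comp (‖y‖ • e) (O.toContinuousLinearEquiv.hasFDerivAt)
  have hfun : (fun z => u (O z, t)) = (fun z => u (z, t)) :=
    funext fun z => hrad _ _ t (O.norm_map z)
  rw [hfun] at hcomp
  have huniq := (hw (‖y‖ • e)).unique hcomp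
  have happ := congrArg (fun (L : (EuclideanSpace ℝ (Fin n) →L[ℝ] ℂ)) => L e) huniq
  have h0 : ((‖y‖⁻¹ • y : EuclideanSpace ℝ (Fin n)), (0:ℝ))
      = ‖y‖⁻¹ • ((y, (0:ℝ)) : EuclideanSpace ℝ (Fin n) × ℝ) := by
    rw [Prod.smul_mk, smul_zero]
  rw [h0, _root_.map_smul]
  simpa [hOz, hOe, ContinuousLinearMap.comp_apply, ContinuousLinearMap.inl_apply,
    Complex.real_smul] using happ

/-- For `u ∈ H¹(ℝ^d)` radial in the first `d−1` variables (`d ≥ 3`), and any `R > 0`,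
`∫_ℝ ‖u(·,x_d)‖²_{L^∞(|y|≥R)} dx_d ≤ C R^{−(d−2)} ‖u‖₂ ‖∇_y u‖₂`. -/
theorem slice_Linfty_outer_bound
    (d : ℕ) (hd : 3 ≤ d) :
    ∃ C : ℝ, 0 < C ∧
      ∀ u : EuclideanSpace ℝ (Fin (d - 1)) × ℝ → ℂ,
        Differentiable ℝ u →
        (∀ (y y' : EuclideanSpace ℝ (Fin (d - 1))) (t : ℝ),
            ‖y‖ = ‖y'‖ → u (y, t) = u (y', t)) →
        MemLp u 2 volume →
        (∀ i : Fin (d - 1),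
            MemLp (fun x => fderiv ℝ u x (EuclideanSpace.single i 1, 0)) 2 volume) →
        MemLp (fun x => fderiv ℝ u x (0, 1)) 2 volume →
        ∀ R : ℝ, 0 < R →
          (∫ t : ℝ,
              (⨆ y : {y : EuclideanSpace ℝ (Fin (d - 1)) // R ≤ ‖y‖}, ‖u (y.1, t)‖) ^ 2) ≤
            C * R ^ (-((d : ℝ) - 2)) *
              Real.sqrt (∫ x : EuclideanSpace ℝ (Fin (d - 1)) × ℝ, ‖u x‖ ^ 2) *
              Real.sqrt (∑ i : Fin (d - 1),
                ∫ x : EuclideanSpace ℝ (Fin (d - 1)) × ℝ,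
                  ‖fderiv ℝ u x (EuclideanSpace.single i 1, 0)‖ ^ 2) := by
  classical
  set n : ℕ := d - 1 with hndef
  have hn2 : 2 ≤ n := by omega
  have hn0 : 0 < n := by omega
  set m : ℕ := n - 1 with hmdef
  have hm1 : 1 ≤ m := by omega
  set E := EuclideanSpace ℝ (Fin n) with hEdef
  have i₀ : Fin n := ⟨0, hn0⟩
  haveI : Nonempty (Fin n) := ⟨i₀⟩
  haveI hEnt : Nontrivial E := inferInstance
  have hfr : Module.finrank ℝ E = n := finrank_euclideanSpace_fin
  set σ : ℝ≥0∞ := (n : ℝ≥0∞) * volume (ball (0 : E) 1) with hσdef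
  have hσ0 : σ ≠ 0 := by
    refine mul_ne_zero (by exact_mod_cast hn0.ne') ?_
    exact (measure_ball_pos volume (0:E) one_pos).ne'
  have hσtop : σ ≠ ⊤ :=
    ENNReal.mul_ne_top (ENNReal.natCast_ne_top n) measure_ball_lt_top.ne
  have hσT : 0 < σ.toReal := ENNReal.toReal_pos hσ0 hσtop
  refine ⟨4 * (σ.toReal)⁻¹, by positivity, ?_⟩
  intro u hu hrad hL2 hDi _hDt R hR
  set e : E := EuclideanSpace.single i₀ 1 with hedef
  have he : ‖e‖ = 1 := by rw [hedef, EuclideanSpace.norm_single]; norm_num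
  have huc : Continuous u := hu.continuous
  set φ : ℝ → ℝ → ℂ := fun t ρ => u (ρ • e, t) with hφdef
  set ψ : ℝ → ℝ → ℂ := fun t ρ => fderiv ℝ u (ρ • e, t) (e, 0) with hψdef
  have hφψ : ∀ t ρ, HasDerivAt (φ t) (ψ t ρ) ρ := by
    intro t ρ
    have h1 : HasDerivAt (fun ρ : ℝ => ρ • e) e ρ := by
      simpa using (hasDerivAt_id ρ).smul_const e
    have h2 : HasDerivAt (fun ρ : ℝ => ((ρ • e : E), t)) ((e, 0) : E × ℝ) ρ :=
      h1.prodMk (hasDerivAt_const ρ t)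
    exact (hu _).hasFDerivAt.comp_hasDerivAt ρ h2
  have happly : Measurable (fun x : E × ℝ => fderiv ℝ u x (e, 0)) :=
    measurable_fderiv_apply_const ℝ u ((e, 0) : E × ℝ)
  have hψt : ∀ t, Measurable (ψ t) := fun t =>
    happly.comp ((continuous_id.smul continuous_const).prodMk
      (continuous_const : Continuous fun _ : ℝ => t)).measurable
  set Dr : E × ℝ → ℂ := fun x => fderiv ℝ u x (‖x.1‖⁻¹ • x.1, 0) with hDrdef
  have hvec : Measurable (fun x : E × ℝ => ((‖x.1‖⁻¹ • x.1 : E), (0:ℝ))) :=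
    ((continuous_fst.norm.measurable.inv).smul continuous_fst.measurable).prodMk
      measurable_const
  have hDrm : Measurable Dr :=
    (isBoundedBilinearMap_apply.continuous.measurable).comp
      ((measurable_fderiv ℝ u).prodMk hvec)
  set P : E × ℝ → ℝ≥0∞ := fun x => ENNReal.ofReal ‖u x‖ * ENNReal.ofReal ‖Dr x‖ with hPdef
  have hPm : Measurable P := (huc.norm.measurable).ennreal_ofReal.mul hDrm.norm.ennreal_ofReal
  set P2 : E × ℝ → ℝ≥0∞ := fun x => ENNReal.ofReal (‖u x‖^2) with hP2def
  have hP2m : Measurable P2 := (huc.norm.pow 2).measurable.ennreal_ofReal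
  set A : ℝ≥0∞ := ∫⁻ x : E × ℝ, P2 x with hAdef
  set B : ℝ≥0∞ := ∑ i : Fin n, ∫⁻ x : E × ℝ,
      ENNReal.ofReal (‖fderiv ℝ u x (EuclideanSpace.single i 1, 0)‖^2) with hBdef
  have hIntu : Integrable (fun x : E × ℝ => ‖u x‖^2) := hL2.norm.integrable_sq
  have hAeq : A = ENNReal.ofReal (∫ x : E × ℝ, ‖u x‖^2) :=
    (ofReal_integral_eq_lintegral_ofReal hIntu
      (Filter.Eventually.of_forall fun x => sq_nonneg _)).symm
  have hAtop : A ≠ ⊤ := by rw [hAeq]; exact ENNReal.ofReal_ne_top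
  have hIntD : ∀ i : Fin n, Integrable
      (fun x : E × ℝ => ‖fderiv ℝ u x (EuclideanSpace.single i 1, 0)‖^2) :=
    fun i => (hDi i).norm.integrable_sq
  have hBeq : B = ENNReal.ofReal (∑ i : Fin n,
      ∫ x : E × ℝ, ‖fderiv ℝ u x (EuclideanSpace.single i 1, 0)‖^2) := by
    rw [ENNReal.ofReal_sum_of_nonneg (fun i _ => integral_nonneg fun x => sq_nonneg _)]
    exact Finset.sum_congr rfl fun i _ => (ofReal_integral_eq_lintegral_ofReal (hIntD i)
      (Filter.Eventually.of_forall fun x => sq_nonneg _)).symm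
  have hBtop : B ≠ ⊤ := by rw [hBeq]; exact ENNReal.ofReal_ne_top
  -- a.e. nonzero first coordinate
  have hzero : (volume : Measure (E × ℝ)) {x : E × ℝ | x.1 = 0} = 0 := by
    have hset : {x : E × ℝ | x.1 = 0} = ({0} : Set E) ×ˢ (univ : Set ℝ) := by
      ext x
      rw [Set.mem_setOf_eq, Set.mem_prod]
      simp
    rw [hset, Measure.volume_eq_prod (α := E) (β := ℝ), Measure.prod_prod, measure_singleton, zero_mul]
  have hae1 : ∀ᵐ x : E × ℝ ∂volume, x.1 ≠ 0 := by
    rw [ae_iff]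
    convert hzero using 2
    ext x; simp
  have hae0E : ∀ᵐ y : E ∂volume, y ≠ 0 := by
    rw [ae_iff]
    have : {y : E | ¬y ≠ 0} = {0} := by ext y; simp
    rw [this]; exact measure_singleton 0
  set M : ℝ≥0∞ := ∫⁻ x : E × ℝ, P x with hMdef
  -- pointwise CS bound
  have hDim : ∀ i : Fin n, Measurable (fun x : E × ℝ =>
      ENNReal.ofReal (‖fderiv ℝ u x (EuclideanSpace.single i 1, 0)‖^2)) := fun i =>
    (((measurable_fderiv_apply_const ℝ u
      ((EuclideanSpace.single i 1, 0) : E × ℝ)).norm).pow_const 2).ennreal_ofReal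
  have hBDr : (∫⁻ x : E × ℝ, ENNReal.ofReal (‖Dr x‖^2)) ≤ B := by
    have hpt : ∀ᵐ x : E × ℝ ∂volume, ENNReal.ofReal (‖Dr x‖^2) ≤
        ∑ i : Fin n, ENNReal.ofReal (‖fderiv ℝ u x (EuclideanSpace.single i 1, 0)‖^2) := by
      filter_upwards [hae1] with x hx
      have h1 : ‖(‖x.1‖⁻¹ • x.1 : E)‖ = 1 := by
        rw [norm_smul, norm_inv, norm_norm, inv_mul_cancel₀ (norm_ne_zero_iff.2 hx)]
      have h2 := coord_CS (fderiv ℝ u x) h1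
      calc ENNReal.ofReal (‖Dr x‖^2)
          ≤ ENNReal.ofReal (∑ i : Fin n,
            ‖fderiv ℝ u x (EuclideanSpace.single i 1, 0)‖^2) := ENNReal.ofReal_le_ofReal h2
      _ = ∑ i : Fin n, ENNReal.ofReal (‖fderiv ℝ u x (EuclideanSpace.single i 1, 0)‖^2) :=
          ENNReal.ofReal_sum_of_nonneg (fun i _ => sq_nonneg _)
    calc (∫⁻ x : E × ℝ, ENNReal.ofReal (‖Dr x‖^2))
        ≤ ∫⁻ x : E × ℝ, ∑ i : Fin n,
          ENNReal.ofReal (‖fderiv ℝ u x (EuclideanSpace.single i 1, 0)‖^2) :=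
        lintegral_mono_ae hpt
    _ = B := lintegral_finset_sum _ (fun i _ => hDim i)
  have hconj : Real.HolderConjugate 2 2 := Real.HolderConjugate.two_two
  have hfto : ∀ v : ℂ, (ENNReal.ofReal ‖v‖) ^ (2:ℝ) = ENNReal.ofReal (‖v‖^2) := by
    intro v
    rw [ENNReal.ofReal_rpow_of_nonneg (norm_nonneg v) (by norm_num)]
    congr 1
    rw [show ((2:ℝ)) = ((2:ℕ):ℝ) by norm_num, Real.rpow_natCast]
  have hM_le : M ≤ A ^ (1/2 : ℝ) * B ^ (1/2 : ℝ) := by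
    have hHold := ENNReal.lintegral_mul_le_Lp_mul_Lq volume hconj
      (f := fun x : E × ℝ => ENNReal.ofReal ‖u x‖)
      (g := fun x : E × ℝ => ENNReal.ofReal ‖Dr x‖)
      (huc.norm.measurable.ennreal_ofReal.aemeasurable)
      (hDrm.norm.ennreal_ofReal.aemeasurable)
    have e1 : (∫⁻ x : E × ℝ, (ENNReal.ofReal ‖u x‖) ^ (2:ℝ)) = A := by
      rw [hAdef]; exact lintegral_congr fun x => by rw [hfto]
    have e2 : (∫⁻ x : E × ℝ, (ENNReal.ofReal ‖Dr x‖) ^ (2:ℝ))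
        = ∫⁻ x : E × ℝ, ENNReal.ofReal (‖Dr x‖^2) :=
      lintegral_congr fun x => by rw [hfto]
    calc M ≤ (∫⁻ x : E × ℝ, (ENNReal.ofReal ‖u x‖) ^ (2:ℝ)) ^ (1/2:ℝ) *
        (∫⁻ x : E × ℝ, (ENNReal.ofReal ‖Dr x‖) ^ (2:ℝ)) ^ (1/2:ℝ) := hHold
    _ = A ^ (1/2:ℝ) * (∫⁻ x : E × ℝ, ENNReal.ofReal (‖Dr x‖^2)) ^ (1/2:ℝ) := by
        rw [e1, e2]
    _ ≤ A ^ (1/2:ℝ) * B ^ (1/2:ℝ) :=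
        mul_le_mul' le_rfl (ENNReal.rpow_le_rpow hBDr (by norm_num))
  have hQtop : A ^ (1/2:ℝ) * B ^ (1/2:ℝ) ≠ ⊤ :=
    ENNReal.mul_ne_top (ENNReal.rpow_ne_top_of_nonneg (by norm_num) hAtop)
      (ENNReal.rpow_ne_top_of_nonneg (by norm_num) hBtop)
  have hMtop : M ≠ ⊤ := ne_top_of_le_ne_top hQtop hM_le
  -- slice integrals
  set Jψ : ℝ → ℝ≥0∞ := fun t => ∫⁻ ρ in Ioi (0:ℝ), ENNReal.ofReal (ρ^m) *
      (ENNReal.ofReal ‖φ t ρ‖ * ENNReal.ofReal ‖ψ t ρ‖) with hJψdef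
  set Jφ : ℝ → ℝ≥0∞ := fun t => ∫⁻ ρ in Ioi (0:ℝ), ENNReal.ofReal (ρ^m) *
      ENNReal.ofReal (‖φ t ρ‖^2) with hJφdef
  have hprodcont : Continuous (fun p : ℝ × ℝ => ((p.2 • e : E), p.1)) :=
    (continuous_snd.smul continuous_const).prodMk continuous_fst
  have hJψm : Measurable Jψ := by
    apply Measurable.lintegral_prod_right'
      (f := fun p : ℝ × ℝ => ENNReal.ofReal (p.2^m) *
        (ENNReal.ofReal ‖φ p.1 p.2‖ * ENNReal.ofReal ‖ψ p.1 p.2‖))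
    exact ((measurable_snd.pow_const m).ennreal_ofReal).mul
      ((((huc.comp hprodcont).norm.measurable).ennreal_ofReal).mul
        ((happly.comp hprodcont.measurable).norm.ennreal_ofReal))
  have hJφm : Measurable Jφ := by
    apply Measurable.lintegral_prod_right'
      (f := fun p : ℝ × ℝ => ENNReal.ofReal (p.2^m) * ENNReal.ofReal (‖φ p.1 p.2‖^2))
    exact ((measurable_snd.pow_const m).ennreal_ofReal).mul
      ((((huc.comp hprodcont).norm.pow 2).measurable).ennreal_ofReal)
  -- polar identities
  have hKψ : ∀ t : ℝ, (∫⁻ y : E, P (y, t)) = σ * Jψ t := by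
    intro t
    have hgm : Measurable (fun ρ : ℝ => ENNReal.ofReal ‖φ t ρ‖ * ENNReal.ofReal ‖ψ t ρ‖) :=
      (((huc.comp ((continuous_id.smul continuous_const).prodMk
        (continuous_const : Continuous fun _ : ℝ => t))).norm.measurable).ennreal_ofReal).mul
        ((hψt t).norm.ennreal_ofReal)
    have hpolar := my_lintegral_fun_norm_addHaar (volume : Measure E)
      (fun ρ => ENNReal.ofReal ‖φ t ρ‖ * ENNReal.ofReal ‖ψ t ρ‖) hgm
    rw [hfr] at hpolar
    have hcongr : (∫⁻ y : E, P (y, t)) = ∫⁻ y : E,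
        (fun ρ => ENNReal.ofReal ‖φ t ρ‖ * ENNReal.ofReal ‖ψ t ρ‖) ‖y‖ := by
      refine lintegral_congr_ae ?_
      filter_upwards [hae0E] with y hy
      have hnrm : ‖(‖y‖ • e : E)‖ = ‖y‖ := by rw [norm_smul, he, norm_norm, mul_one]
      have h1 : u ((‖y‖ • e : E), t) = u (y, t) := hrad _ _ t hnrm
      have h2 : ψ t ‖y‖ = Dr (y, t) := radial_fderiv hu hrad he t hy
      simp only [hPdef, hφdef, hψdef, hDrdef] at *
      rw [h1] at *
      rw [h2]
    rw [hcongr, hpolar]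
  have hKφ : ∀ t : ℝ, (∫⁻ y : E, P2 (y, t)) = σ * Jφ t := by
    intro t
    have hgm : Measurable (fun ρ : ℝ => ENNReal.ofReal (‖φ t ρ‖^2)) :=
      (((huc.comp ((continuous_id.smul continuous_const).prodMk
        (continuous_const : Continuous fun _ : ℝ => t))).norm.pow 2).measurable).ennreal_ofReal
    have hpolar := my_lintegral_fun_norm_addHaar (volume : Measure E)
      (fun ρ => ENNReal.ofReal (‖φ t ρ‖^2)) hgm
    rw [hfr] at hpolar
    have hcongr : (∫⁻ y : E, P2 (y, t)) = ∫⁻ y : E,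
        (fun ρ => ENNReal.ofReal (‖φ t ρ‖^2)) ‖y‖ := by
      refine lintegral_congr_ae ?_
      filter_upwards [hae0E] with y hy
      have hnrm : ‖(‖y‖ • e : E)‖ = ‖y‖ := by rw [norm_smul, he, norm_norm, mul_one]
      have h1 : u ((‖y‖ • e : E), t) = u (y, t) := hrad _ _ t hnrm
      simp only [hP2def, hφdef]
      rw [h1]
    rw [hcongr, hpolar]
  -- Fubini
  have hMF : M = ∫⁻ t : ℝ, ∫⁻ y : E, P (y, t) := by
    rw [hMdef, Measure.volume_eq_prod]
    exact lintegral_prod_symm P (by rw [← Measure.volume_eq_prod]; exact hPm.aemeasurable)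
  have hAF : A = ∫⁻ t : ℝ, ∫⁻ y : E, P2 (y, t) := by
    rw [hAdef, Measure.volume_eq_prod]
    exact lintegral_prod_symm P2 (by rw [← Measure.volume_eq_prod]; exact hP2m.aemeasurable)
  have hσJψ : σ * ∫⁻ t : ℝ, Jψ t = M := by
    rw [← lintegral_const_mul σ hJψm, hMF]
    exact lintegral_congr fun t => (hKψ t).symm
  have hσJφ : σ * ∫⁻ t : ℝ, Jφ t = A := by
    rw [← lintegral_const_mul σ hJφm, hAF]
    exact lintegral_congr fun t => (hKφ t).symm
  have hJψfin : (∫⁻ t : ℝ, Jψ t) ≠ ⊤ := fun h =>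
    hMtop (by rw [← hσJψ, h, ENNReal.mul_top hσ0])
  have hJφfin : (∫⁻ t : ℝ, Jφ t) ≠ ⊤ := fun h =>
    hAtop (by rw [← hσJφ, h, ENNReal.mul_top hσ0])
  -- slice bound a.e.
  set c4 : ℝ≥0∞ := ENNReal.ofReal (4 * (R^m)⁻¹) with hc4def
  set gb : ℝ → ℝ := fun t => (c4 * Jψ t).toReal with hgbdef
  have hgb0 : ∀ t, 0 ≤ gb t := fun t => ENNReal.toReal_nonneg
  have haesup : ∀ᵐ t : ℝ ∂volume,
      (⨆ y : {y : E // R ≤ ‖y‖}, ‖u (y.1, t)‖)^2 ≤ gb t := by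
    filter_upwards [ae_lt_top hJψm hJψfin, ae_lt_top hJφm hJφfin] with t h1 h2
    have hsl : ∀ y : E, R ≤ ‖y‖ → ‖u (y, t)‖^2 ≤ gb t := by
      intro y hy
      have hy0 : y ≠ 0 := by
        intro h0; rw [h0, norm_zero] at hy; exact absurd hy (not_le.2 hR)
      have hnrm : ‖(‖y‖ • e : E)‖ = ‖y‖ := by rw [norm_smul, he, norm_norm, mul_one]
      have h3 : ‖u (y, t)‖ = ‖φ t ‖y‖‖ := by
        rw [hφdef]; exact (congrArg norm (hrad _ _ t hnrm)).symm
      have h4 := slice_bound (hφψ t) (hψt t) hR h1.ne h2.ne hy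
      rw [h3]
      exact h4
    have h0 : 0 ≤ ⨆ y : {y : E // R ≤ ‖y‖}, ‖u (y.1, t)‖ :=
      Real.iSup_nonneg fun y => norm_nonneg _
    have hub : (⨆ y : {y : E // R ≤ ‖y‖}, ‖u (y.1, t)‖) ≤ Real.sqrt (gb t) := by
      refine Real.iSup_le (fun y => ?_) (Real.sqrt_nonneg _)
      calc ‖u (y.1, t)‖ = Real.sqrt (‖u (y.1, t)‖^2) := (Real.sqrt_sq (norm_nonneg _)).symm
      _ ≤ Real.sqrt (gb t) := Real.sqrt_le_sqrt (hsl y.1 y.2)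
    calc (⨆ y : {y : E // R ≤ ‖y‖}, ‖u (y.1, t)‖)^2
        ≤ (Real.sqrt (gb t))^2 := pow_le_pow_left₀ h0 hub 2
    _ = gb t := Real.sq_sqrt (hgb0 t)
  -- integral bound
  have hcJm : Measurable fun t => c4 * Jψ t := hJψm.const_mul c4
  have hcJfin : (∫⁻ t : ℝ, c4 * Jψ t) ≠ ⊤ := by
    rw [lintegral_const_mul c4 hJψm]
    exact ENNReal.mul_ne_top ENNReal.ofReal_ne_top hJψfin
  have hgbint : Integrable gb :=
    integrable_toReal_of_lintegral_ne_top hcJm.aemeasurable hcJfin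
  have hLHS : (∫ t : ℝ, (⨆ y : {y : E // R ≤ ‖y‖}, ‖u (y.1, t)‖)^2) ≤ ∫ t : ℝ, gb t :=
    integral_mono_of_nonneg (Filter.Eventually.of_forall fun t => sq_nonneg _) hgbint haesup
  have hgbeq : (∫ t : ℝ, gb t) = (c4 * ∫⁻ t : ℝ, Jψ t).toReal := by
    rw [hgbdef]
    rw [integral_toReal hcJm.aemeasurable (ae_lt_top hcJm hcJfin)]
    rw [lintegral_const_mul c4 hJψm]
  have hJψle : (∫⁻ t : ℝ, Jψ t) ≤ σ⁻¹ * (A ^ (1/2:ℝ) * B ^ (1/2:ℝ)) := by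
    have h1 : σ * ∫⁻ t : ℝ, Jψ t ≤ A ^ (1/2:ℝ) * B ^ (1/2:ℝ) := by
      rw [hσJψ]; exact hM_le
    calc (∫⁻ t : ℝ, Jψ t) = σ⁻¹ * (σ * ∫⁻ t : ℝ, Jψ t) := by
          rw [← mul_assoc, ENNReal.inv_mul_cancel hσ0 hσtop, one_mul]
    _ ≤ σ⁻¹ * (A ^ (1/2:ℝ) * B ^ (1/2:ℝ)) := mul_le_mul' le_rfl h1
  have hfinRHS : c4 * (σ⁻¹ * (A ^ (1/2:ℝ) * B ^ (1/2:ℝ))) ≠ ⊤ :=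
    ENNReal.mul_ne_top ENNReal.ofReal_ne_top
      (ENNReal.mul_ne_top (ENNReal.inv_ne_top.2 hσ0) hQtop)
  have hfinal : (c4 * ∫⁻ t : ℝ, Jψ t).toReal ≤
      (c4 * (σ⁻¹ * (A ^ (1/2:ℝ) * B ^ (1/2:ℝ)))).toReal :=
    ENNReal.toReal_mono hfinRHS (mul_le_mul' le_rfl hJψle)
  -- identify the RHS
  have hsqrtA : (A ^ (1/2:ℝ)).toReal = Real.sqrt (∫ x : E × ℝ, ‖u x‖^2) := by
    have hnn : 0 ≤ ∫ x : E × ℝ, ‖u x‖^2 := integral_nonneg fun x => sq_nonneg _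
    rw [hAeq, ENNReal.ofReal_rpow_of_nonneg hnn (by norm_num),
      ENNReal.toReal_ofReal (Real.rpow_nonneg hnn _), Real.sqrt_eq_rpow]
  have hsqrtB : (B ^ (1/2:ℝ)).toReal = Real.sqrt (∑ i : Fin n,
      ∫ x : E × ℝ, ‖fderiv ℝ u x (EuclideanSpace.single i 1, 0)‖^2) := by
    have hnn : 0 ≤ ∑ i : Fin n, ∫ x : E × ℝ,
        ‖fderiv ℝ u x (EuclideanSpace.single i 1, 0)‖^2 :=
      Finset.sum_nonneg fun i _ => integral_nonneg fun x => sq_nonneg _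
    rw [hBeq, ENNReal.ofReal_rpow_of_nonneg hnn (by norm_num),
      ENNReal.toReal_ofReal (Real.rpow_nonneg hnn _), Real.sqrt_eq_rpow]
  have hc4T : c4.toReal = 4 * (R^m)⁻¹ := by
    rw [hc4def, ENNReal.toReal_ofReal]
    positivity
  have hRpow : R ^ (-((d:ℝ) - 2)) = (R^m)⁻¹ := by
    have hcast : ((d:ℝ) - 2) = (m : ℝ) := by
      have h : m + 2 = d := by omega
      push_cast [← h]
      ring
    rw [hcast, Real.rpow_neg hR.le, Real.rpow_natCast]
  have hRHSval : (c4 * (σ⁻¹ * (A ^ (1/2:ℝ) * B ^ (1/2:ℝ)))).toReal =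
      4 * σ.toReal⁻¹ * R ^ (-((d:ℝ) - 2)) *
        Real.sqrt (∫ x : E × ℝ, ‖u x‖^2) *
        Real.sqrt (∑ i : Fin n, ∫ x : E × ℝ,
          ‖fderiv ℝ u x (EuclideanSpace.single i 1, 0)‖^2) := by
    rw [ENNReal.toReal_mul, ENNReal.toReal_mul, ENNReal.toReal_mul, hc4T,
      ENNReal.toReal_inv, hsqrtA, hsqrtB, hRpow]
    ring
  calc (∫ t : ℝ, (⨆ y : {y : E // R ≤ ‖y‖}, ‖u (y.1, t)‖)^2)
      ≤ ∫ t : ℝ, gb t := hLHS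
  _ = (c4 * ∫⁻ t : ℝ, Jψ t).toReal := hgbeq
  _ ≤ (c4 * (σ⁻¹ * (A ^ (1/2:ℝ) * B ^ (1/2:ℝ)))).toReal := hfinal
  _ = 4 * σ.toReal⁻¹ * R ^ (-((d:ℝ) - 2)) *
        Real.sqrt (∫ x : E × ℝ, ‖u x‖^2) *
        Real.sqrt (∑ i : Fin n, ∫ x : E × ℝ,
          ‖fderiv ℝ u x (EuclideanSpace.single i 1, 0)‖^2) := hRHSval
end

section
/- Let d ≥ 2 and 0 < σ < 1, and let u ∈ H¹(ℝ^d); write x = (y, x_d) ∈ ℝ^{d−1} × ℝ. Then there is a constant C > 0 depending only on σ such that ∫_ℝ ‖u(·, x_d)‖_{L²(ℝ^{d−1})}^{2/(1−σ)} dx_d ≤ C ‖∂_d u‖_{L²(ℝ^d)}^{σ/(1−σ)} ‖u‖_{L²(ℝ^d)}^{(2−σ)/(1−σ)}, where ∂_d is the partial derivative in the last coordinate. -/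
open MeasureTheory Real
open scoped ENNReal NNReal

set_option linter.unusedSectionVars false

section Aux
variable {E : Type*} [NormedAddCommGroup E] [NormedSpace ℝ E]

lemma aux_normsq (z : ℂ) : ‖z‖ ^ 2 = z.re ^ 2 + z.im ^ 2 := by
  rw [Complex.sq_norm, Complex.normSq_apply] ; ring

lemma aux_deriv (u : E × ℝ → ℂ) (hu : Differentiable ℝ u) (y : E) (s : ℝ) :
    HasDerivAt (fun s => ‖u (y, s)‖ ^ 2)
      (2 * ((u (y,s)).re * (fderiv ℝ u (y,s) (0,1)).re
        + (u (y,s)).im * (fderiv ℝ u (y,s) (0,1)).im)) s := by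
  have hc : HasDerivAt (fun s : ℝ => ((y, s) : E × ℝ)) (0, 1) s :=
    (hasDerivAt_const s y).prodMk (hasDerivAt_id s)
  have hφ : HasDerivAt (fun s => u (y, s)) (fderiv ℝ u (y,s) (0,1)) s :=
    (hu (y, s)).hasFDerivAt.comp_hasDerivAt s hc
  have hre : HasDerivAt (fun s => (u (y, s)).re) ((fderiv ℝ u (y,s) (0,1)).re) s :=
    Complex.reCLM.hasFDerivAt.comp_hasDerivAt s hφ
  have him : HasDerivAt (fun s => (u (y, s)).im) ((fderiv ℝ u (y,s) (0,1)).im) s :=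
    Complex.imCLM.hasFDerivAt.comp_hasDerivAt s hφ
  have key := (hre.pow 2).add (him.pow 2)
  simp only [aux_normsq]
  refine key.congr_deriv ?_
  push_cast
  ring

lemma aux_abs_le (a b : ℂ) : |2 * (a.re * b.re + a.im * b.im)| ≤ 2 * (‖a‖ * ‖b‖) := by
  have h1 : a.re * b.re + a.im * b.im = (a * (starRingEnd ℂ) b).re := by
    simp [Complex.mul_re]
  rw [abs_mul, abs_two, h1]
  gcongr
  calc |(a * (starRingEnd ℂ) b).re| ≤ ‖a * (starRingEnd ℂ) b‖ :=
        Complex.abs_re_le_norm _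
    _ = ‖a‖ * ‖b‖ := by
        rw [norm_mul, Complex.norm_conj]
end Aux

section Aux2
variable {E : Type*} [NormedAddCommGroup E] [NormedSpace ℝ E]
  [MeasureSpace E] [BorelSpace E] [SecondCountableTopology E] [SigmaFinite (volume : Measure E)]

lemma aux_sup (u : E × ℝ → ℂ) (hu : Differentiable ℝ u)
    (hu2 : MemLp u 2 volume)
    (hd : MemLp (fun x => fderiv ℝ u x (0,1)) 2 volume) :
    ∀ᵐ t : ℝ, (∫ y, ‖u (y,t)‖ ^ 2) ≤
      ∫ x : E × ℝ, 2 * (‖u x‖ * ‖fderiv ℝ u x (0,1)‖) := by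
  set D : E × ℝ → ℂ := fun x => fderiv ℝ u x (0,1) with hD
  set H : E × ℝ → ℝ := fun x => 2 * ((u x).re * (D x).re + (u x).im * (D x).im) with hH
  have habs : ∀ x, |H x| ≤ 2 * (‖u x‖ * ‖D x‖) := fun x => aux_abs_le _ _
  -- integrability of ‖u‖ * ‖D‖
  have hmul : Integrable (fun x => ‖u x‖ * ‖D x‖) volume := by
    have h2 : (1 : ℝ≥0∞) / 1 = 1 / 2 + 1 / 2 := by
      rw [ENNReal.div_add_div_same, one_div_one, one_add_one_eq_two]
      exact (ENNReal.div_self two_ne_zero ENNReal.ofNat_ne_top).symm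
    have := (hd.norm.smul hu2.norm : MemLp ((fun x => ‖u x‖) • fun x => ‖D x‖) 1 volume)
    rw [memLp_one_iff_integrable] at this
    simpa [Pi.smul_apply, smul_eq_mul, Pi.mul_def] using this
  have hHmeas : AEStronglyMeasurable H volume := by
    have hum : AEStronglyMeasurable u volume := hu.continuous.aestronglyMeasurable
    have hDm : AEStronglyMeasurable D volume := hd.1
    apply AEStronglyMeasurable.const_mul
    exact ((Complex.continuous_re.comp_aestronglyMeasurable hum).mul
        (Complex.continuous_re.comp_aestronglyMeasurable hDm)).add
      ((Complex.continuous_im.comp_aestronglyMeasurable hum).mul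
        (Complex.continuous_im.comp_aestronglyMeasurable hDm))
  have hHint : Integrable H volume := by
    refine (hmul.const_mul 2).mono hHmeas (ae_of_all _ fun x => ?_)
    have := habs x
    rw [Real.norm_eq_abs, Real.norm_eq_abs]
    exact this.trans (le_abs_self _)
  -- product measure setup
  have hvol : (volume : Measure (E × ℝ)) = (volume : Measure E).prod (volume : Measure ℝ) :=
    Measure.volume_eq_prod _ _
  have hF : Integrable (fun x : E × ℝ => ‖u x‖ ^ 2) volume :=
    (memLp_two_iff_integrable_sq_norm hu2.1).mp hu2
  have hF' : Integrable (fun x : E × ℝ => ‖u x‖ ^ 2) ((volume : Measure E).prod volume) := by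
    rw [← hvol]; exact hF
  set g : ℝ → ℝ := fun t => ∫ y, ‖u (y,t)‖ ^ 2 with hg
  have hgnn : ∀ t, 0 ≤ g t := fun t => integral_nonneg fun y => by positivity
  have hg_int : Integrable g volume := hF'.integral_prod_right
  have hslice : ∀ᵐ t : ℝ, Integrable (fun y => ‖u (y,t)‖ ^ 2) (volume : Measure E) :=
    hF'.prod_left_ae
  have hHint' : Integrable H ((volume : Measure E).prod volume) := by rw [← hvol]; exact hHint
  have hHslice : ∀ᵐ y : E, Integrable (fun s => H (y,s)) (volume : Measure ℝ) :=
    hHint'.prod_right_ae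
  have hIabs : Integrable (fun y => ∫ s, |H (y,s)|) (volume : Measure E) := by
    have := hHint'.integral_norm_prod_left
    simpa [Real.norm_eq_abs] using this
  set M : ℝ := ∫ x : E × ℝ, 2 * (‖u x‖ * ‖D x‖) with hM_def
  have hM : (∫ y, ∫ s, |H (y,s)|) ≤ M := by
    have h1 : (∫ y, ∫ s, |H (y,s)|) = ∫ x : E × ℝ, |H x| ∂((volume : Measure E).prod volume) :=
      integral_integral (f := fun y s => |H (y, s)|) hHint'.abs
    have h2 : (∫ x : E × ℝ, |H x| ∂((volume : Measure E).prod volume)) = ∫ x : E × ℝ, |H x| := by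
      rw [← hvol]
    rw [h1, h2, hM_def]
    exact integral_mono hHint.abs (hmul.const_mul 2) habs
  -- main a.e. bound
  filter_upwards [hslice] with t ht
  refine le_of_forall_pos_le_add fun ε hε => ?_
  obtain ⟨a, ha_int, ha_small⟩ :
      ∃ a : ℝ, Integrable (fun y => ‖u (y,a)‖ ^ 2) (volume : Measure E) ∧ g a ≤ ε := by
    by_contra hcon
    push_neg at hcon
    have hae : ∀ᵐ a : ℝ, ε ≤ g a := hslice.mono fun a ha => (hcon a ha).le
    have hIg : 0 ≤ ∫ t, g t := integral_nonneg hgnn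
    set R : ℝ := ((∫ t, g t) + 1) / (2 * ε) with hR_def
    have hRpos : 0 < R := by positivity
    have h1 : ∫ s in Set.Icc (-R) R, (ε:ℝ) ≤ ∫ s in Set.Icc (-R) R, g s := by
      refine integral_mono_ae ?_ hg_int.integrableOn (ae_restrict_of_ae hae)
      exact integrableOn_const (by simp [Real.volume_Icc])
    rw [setIntegral_const] at h1
    have hvolIcc : (volume (Set.Icc (-R) R)).toReal = 2 * R := by
      rw [Real.volume_Icc, ENNReal.toReal_ofReal (by linarith)]
      ring
    rw [measureReal_def, hvolIcc] at h1
    have h2 : ∫ s in Set.Icc (-R) R, g s ≤ ∫ t, g t :=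
      setIntegral_le_integral hg_int (ae_of_all _ hgnn)
    have : 2 * R * ε = (∫ t, g t) + 1 := by
      rw [hR_def]; field_simp
    simp only [smul_eq_mul] at h1
    linarith
  have key : g t - g a ≤ ∫ y, ∫ s, |H (y, s)| := by
    rw [hg]
    simp only
    rw [← integral_sub ht ha_int]
    refine integral_mono_ae (ht.sub ha_int) hIabs ?_
    filter_upwards [hHslice] with y hy
    have hftc : ∫ s in a..t, H (y, s) = ‖u (y,t)‖ ^ 2 - ‖u (y,a)‖ ^ 2 :=
      intervalIntegral.integral_eq_sub_of_hasDerivAt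
        (fun s _ => aux_deriv u hu y s) hy.intervalIntegrable
    calc ‖u (y,t)‖ ^ 2 - ‖u (y,a)‖ ^ 2 = ∫ s in a..t, H (y,s) := hftc.symm
      _ ≤ |∫ s in a..t, H (y,s)| := le_abs_self _
      _ ≤ ∫ s in Set.uIoc a t, |H (y,s)| := by
          have h := intervalIntegral.norm_integral_le_integral_norm_uIoc
              (f := fun s => H (y,s)) (a := a) (b := t) (μ := volume)
          simpa only [Real.norm_eq_abs] using h
      _ ≤ ∫ s, |H (y,s)| := setIntegral_le_integral hy.abs (ae_of_all _ fun s => abs_nonneg _)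
  have : g t ≤ g a + (∫ y, ∫ s, |H (y, s)|) := by linarith
  calc g t ≤ g a + (∫ y, ∫ s, |H (y, s)|) := this
    _ ≤ M + ε := by linarith [hM, ha_small]
end Aux2

theorem aux_main {E : Type*} [NormedAddCommGroup E] [NormedSpace ℝ E]
    [MeasureSpace E] [BorelSpace E] [SecondCountableTopology E]
    [SigmaFinite (volume : Measure E)]
    (σ : ℝ) (hσ0 : 0 < σ) (hσ1 : σ < 1)
    (u : E × ℝ → ℂ) (hu : Differentiable ℝ u)
    (hu2 : MemLp u 2 volume)
    (hdmem : MemLp (fun x => fderiv ℝ u x (0, 1)) 2 volume) :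
    (∫ t : ℝ, (Real.sqrt (∫ y : E, ‖u (y, t)‖ ^ 2)) ^ (2 / (1 - σ))) ≤
      (2:ℝ) ^ (σ / (1 - σ)) *
        (Real.sqrt (∫ x : E × ℝ, ‖fderiv ℝ u x (0, 1)‖ ^ 2)) ^ (σ / (1 - σ)) *
        (Real.sqrt (∫ x : E × ℝ, ‖u x‖ ^ 2)) ^ ((2 - σ) / (1 - σ)) := by
  have h1σ : 0 < 1 - σ := by linarith
  set p : ℝ := σ / (1 - σ) with hp_def
  have hp : 0 ≤ p := by positivity
  set D : E × ℝ → ℂ := fun x => fderiv ℝ u x (0,1) with hD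
  set A : ℝ := ∫ x : E × ℝ, ‖u x‖ ^ 2 with hA_def
  set B : ℝ := ∫ x : E × ℝ, ‖D x‖ ^ 2 with hB_def
  have hA : 0 ≤ A := integral_nonneg fun x => by positivity
  have hB : 0 ≤ B := integral_nonneg fun x => by positivity
  set M : ℝ := ∫ x : E × ℝ, 2 * (‖u x‖ * ‖D x‖) with hM_def
  have hMnn : 0 ≤ M := integral_nonneg fun x => by positivity
  -- Cauchy–Schwarz: M ≤ 2 √A √B
  have hM_le : M ≤ 2 * (Real.sqrt A * Real.sqrt B) := by
    have hpq : Real.HolderConjugate 2 2 := Real.HolderConjugate.two_two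
    have h2 : (ENNReal.ofReal (2:ℝ)) = 2 := by simp [ENNReal.ofReal_ofNat]
    have hu2' : MemLp u (ENNReal.ofReal (2:ℝ)) volume := by rw [h2]; exact hu2
    have hd' : MemLp D (ENNReal.ofReal (2:ℝ)) volume := by rw [h2]; exact hdmem
    have hHold := integral_mul_norm_le_Lp_mul_Lq (μ := volume) hpq hu2' hd'
    have he : ∀ f : E × ℝ → ℂ, (∫ x : E × ℝ, ‖f x‖ ^ (2:ℝ)) = ∫ x : E × ℝ, ‖f x‖ ^ 2 := by
      intro f
      refine integral_congr_ae (ae_of_all _ fun x => ?_)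
      show ‖f x‖ ^ (2:ℝ) = ‖f x‖ ^ (2:ℕ)
      exact Real.rpow_two _
    rw [he u, he D] at hHold
    rw [hM_def, MeasureTheory.integral_const_mul]
    have hsq : Real.sqrt A * Real.sqrt B = A ^ ((1:ℝ)/2) * B ^ ((1:ℝ)/2) := by
      rw [Real.sqrt_eq_rpow, Real.sqrt_eq_rpow]
    rw [hsq]
    have : (1:ℝ)/2 = 1/(2:ℝ) := rfl
    calc (2:ℝ) * ∫ x : E × ℝ, ‖u x‖ * ‖D x‖
        ≤ 2 * (A ^ ((1:ℝ)/2) * B ^ ((1:ℝ)/2)) := by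
          have := hHold
          gcongr
      _ = 2 * (A ^ ((1:ℝ)/2) * B ^ ((1:ℝ)/2)) := rfl
  -- slice function
  set g : ℝ → ℝ := fun t => ∫ y : E, ‖u (y,t)‖ ^ 2 with hg
  have hgnn : ∀ t, 0 ≤ g t := fun t => integral_nonneg fun y => by positivity
  have hvol : (volume : Measure (E × ℝ)) = (volume : Measure E).prod (volume : Measure ℝ) :=
    Measure.volume_eq_prod _ _
  have hF : Integrable (fun x : E × ℝ => ‖u x‖ ^ 2) volume :=
    (memLp_two_iff_integrable_sq_norm hu2.1).mp hu2
  have hF' : Integrable (fun x : E × ℝ => ‖u x‖ ^ 2) ((volume : Measure E).prod volume) := by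
    rw [← hvol]; exact hF
  have hg_int : Integrable g volume := hF'.integral_prod_right
  have hgA : (∫ t, g t) = A := by
    have h1 := integral_integral_swap (f := fun y t => ‖u (y,t)‖ ^ 2) hF'
    have h2 := integral_integral (f := fun y t => ‖u (y,t)‖ ^ 2) hF'
    rw [hg, hA_def, hvol]
    rw [← h1, h2]
  -- a.e. bound  g ≤ M
  have hsup : ∀ᵐ t : ℝ, g t ≤ M := aux_sup u hu hu2 hdmem
  -- pointwise bound on the integrand
  have hpt : ∀ᵐ t : ℝ, (Real.sqrt (g t)) ^ (2 / (1 - σ)) ≤ M ^ p * g t := by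
    filter_upwards [hsup] with t ht
    have h1 : (Real.sqrt (g t)) ^ (2 / (1 - σ)) = g t ^ (1 / (1 - σ)) := by
      rw [Real.sqrt_eq_rpow, ← Real.rpow_mul (hgnn t)]
      congr 1
      field_simp
    rw [h1]
    have h2 : (1:ℝ) / (1 - σ) = p + 1 := by
      rw [hp_def]; field_simp; ring
    rw [h2, Real.rpow_add' (hgnn t) (by positivity), Real.rpow_one]
    have h3 : g t ^ p ≤ M ^ p := Real.rpow_le_rpow (hgnn t) ht hp
    exact mul_le_mul_of_nonneg_right h3 (hgnn t)
  -- integrate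
  have hInt : (∫ t : ℝ, (Real.sqrt (g t)) ^ (2 / (1 - σ))) ≤ M ^ p * A := by
    have h := integral_mono_of_nonneg
      (ae_of_all _ fun t => Real.rpow_nonneg (Real.sqrt_nonneg _) _)
      (hg_int.const_mul (M ^ p)) hpt
    rw [MeasureTheory.integral_const_mul, hgA] at h
    exact h
  refine hInt.trans ?_
  -- final algebra
  have hMp : M ^ p ≤ (2 * (Real.sqrt A * Real.sqrt B)) ^ p :=
    Real.rpow_le_rpow hMnn hM_le hp
  have hq : (2 - σ) / (1 - σ) = p + 2 := by rw [hp_def]; field_simp; ring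
  have hAq : Real.sqrt A ^ ((2 - σ) / (1 - σ)) = Real.sqrt A ^ p * A := by
    rw [hq, Real.rpow_add' (Real.sqrt_nonneg A) (by positivity)]
    congr 1
    rw [Real.rpow_two, sq, Real.mul_self_sqrt hA]
  have hexp : (2 * (Real.sqrt A * Real.sqrt B)) ^ p
      = 2 ^ p * (Real.sqrt A ^ p * Real.sqrt B ^ p) := by
    rw [Real.mul_rpow (by norm_num) (by positivity),
      Real.mul_rpow (Real.sqrt_nonneg _) (Real.sqrt_nonneg _)]
  calc M ^ p * A ≤ (2 * (Real.sqrt A * Real.sqrt B)) ^ p * A :=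
        mul_le_mul_of_nonneg_right hMp hA
    _ = 2 ^ p * Real.sqrt B ^ p * (Real.sqrt A ^ p * A) := by rw [hexp]; ring
    _ = 2 ^ p * Real.sqrt B ^ p * Real.sqrt A ^ ((2 - σ) / (1 - σ)) := by rw [hAq]


/-- For `0 < σ < 1` there is `C = C(σ) > 0` such that for every `d ≥ 2` and
`u ∈ H¹(ℝ^d)`, writing `x = (y, x_d)`,
`∫_ℝ ‖u(·,x_d)‖_{L²_y}^{2/(1−σ)} dx_d ≤ C ‖∂_d u‖₂^{σ/(1−σ)} ‖u‖₂^{(2−σ)/(1−σ)}`. -/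
theorem slice_L2_interpolation
    (σ : ℝ) (hσ0 : 0 < σ) (hσ1 : σ < 1) :
    ∃ C : ℝ, 0 < C ∧
      ∀ d : ℕ, 2 ≤ d →
      ∀ u : EuclideanSpace ℝ (Fin (d - 1)) × ℝ → ℂ,
        Differentiable ℝ u →
        MemLp u 2 volume →
        (∀ i : Fin (d - 1),
            MemLp (fun x => fderiv ℝ u x (EuclideanSpace.single i 1, 0)) 2 volume) →
        MemLp (fun x => fderiv ℝ u x (0, 1)) 2 volume →
        (∫ t : ℝ,
            (Real.sqrt (∫ y : EuclideanSpace ℝ (Fin (d - 1)), ‖u (y, t)‖ ^ 2)) ^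
              (2 / (1 - σ))) ≤
          C * (Real.sqrt (∫ x : EuclideanSpace ℝ (Fin (d - 1)) × ℝ,
                ‖fderiv ℝ u x (0, 1)‖ ^ 2)) ^ (σ / (1 - σ)) *
            (Real.sqrt (∫ x : EuclideanSpace ℝ (Fin (d - 1)) × ℝ, ‖u x‖ ^ 2)) ^
              ((2 - σ) / (1 - σ)) := by
  refine ⟨(2:ℝ) ^ (σ / (1 - σ)), Real.rpow_pos_of_pos two_pos _, ?_⟩
  intro d hd u hu hu2 _ hdmem
  exact aux_main σ hσ0 hσ1 u hu hu2 hdmem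
end
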